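/- (Theorem 6, part i) Fix c ∈ ℝ and s ≥ 0. Then the expected number of features per sample in the covariate-dependent MVP-IBP model with covariate effect mean c = x_i^T γ and variance s = x_i^T Ψ x_i satisfies lim_{p→∞} p · Φ((μ_p + c)/√(2 log p + s)) = α · exp(c + (s − 1)/2) = α g_i, where g_i = exp{x_i^T γ + ½(x_i^T Ψ x_i − 1)}. -/

import Mathlib

open MeasureTheory Real Filter

/-- The standard normal density `φ(x) = (2π)^{-1/2} exp(-x²/2)`. -/
noncomputable def stdNormalPDF (x : ℝ) : ℝ :=
  (Real.sqrt (2 * Real.pi))⁻¹ * Real.exp (-x ^ 2 / 2)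

/-- The standard normal CDF `Φ(x) = ∫_{-∞}^x φ(t) dt`. -/
noncomputable def stdNormalCDF (x : ℝ) : ℝ :=
  ∫ t in Set.Iio x, stdNormalPDF t

/-- `τ_p = √(2 log p)`. -/
noncomputable def tauP (p : ℕ) : ℝ := Real.sqrt (2 * Real.log p)

/-- The density of `N(μ_p, τ_p²)` at `x`, namely `τ_p⁻¹ φ((x - μ_p)/τ_p)`. -/
noncomputable def mvpDens (μ : ℕ → ℝ) (p : ℕ) (x : ℝ) : ℝ :=
  (tauP p)⁻¹ * stdNormalPDF ((x - μ p) / tauP p)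

open Set

lemma pdf_pos (x : ℝ) : 0 < stdNormalPDF x := by
  unfold stdNormalPDF
  positivity

lemma pdf_eq (x : ℝ) : stdNormalPDF x = (Real.sqrt (2 * Real.pi))⁻¹ * Real.exp (-(2⁻¹ * x ^ 2)) := by
  unfold stdNormalPDF; ring_nf

lemma integrable_pdf : Integrable stdNormalPDF := by
  have h : Integrable (fun x : ℝ => Real.exp (-(2⁻¹ : ℝ) * x ^ 2)) := integrable_exp_neg_mul_sq (by norm_num)
  have h2 := h.const_mul (Real.sqrt (2 * Real.pi))⁻¹
  refine h2.congr (Filter.Eventually.of_forall fun x => by simp only [stdNormalPDF]; ring_nf)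

lemma continuous_pdf : Continuous stdNormalPDF := by
  have : Continuous fun x : ℝ => (Real.sqrt (2 * Real.pi))⁻¹ * Real.exp (-x ^ 2 / 2) :=
    continuous_const.mul (Real.continuous_exp.comp (((continuous_pow 2).neg).div_const 2))
  exact this

lemma pdf_tendsto_atBot : Tendsto stdNormalPDF atBot (nhds 0) := by
  have hsq : Tendsto (fun x : ℝ => x ^ 2) atBot atTop := by
    have h1 : Tendsto (fun x : ℝ => -x) atBot atTop := tendsto_neg_atBot_atTop
    have h2 : Tendsto (fun y : ℝ => y ^ 2) atTop atTop := tendsto_pow_atTop (by norm_num : 2 ≠ 0)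
    refine (h2.comp h1).congr fun x => ?_
    simp [Function.comp, neg_pow]
  have h1 : Tendsto (fun x : ℝ => -x ^ 2 / 2) atBot atBot := by
    have hn : Tendsto (fun y : ℝ => -y) atTop atBot := tendsto_neg_atTop_atBot
    have h2 : Tendsto (fun x : ℝ => -x ^ 2) atBot atBot := hn.comp hsq
    exact h2.atBot_div_const (by norm_num)
  have := (Real.tendsto_exp_atBot).comp h1
  have h3 : Tendsto (fun x : ℝ => (Real.sqrt (2 * Real.pi))⁻¹ * Real.exp (-x ^ 2 / 2)) atBot (nhds ((Real.sqrt (2 * Real.pi))⁻¹ * 0)) := this.const_mul _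
  rw [mul_zero] at h3
  exact h3.congr fun x => rfl

/-- FTC on `Iio`. -/
lemma integral_Iio_of_hasDerivAt_of_tendsto' {f f' : ℝ → ℝ} {b m : ℝ}
    (hderiv : ∀ x ∈ Iic b, HasDerivAt f (f' x) x)
    (f'int : IntegrableOn f' (Iio b)) (hf : Tendsto f atBot (nhds m)) :
    ∫ x in Iio b, f' x = f b - m := by
  have key := MeasureTheory.integral_Ioi_of_hasDerivAt_of_tendsto'
    (f := fun x => f (-x)) (f' := fun x => -f' (-x)) (a := -b) (m := m)
    (fun x hx => by
      have hx' : -x ∈ Iic b := by simp only [mem_Iic]; rw [mem_Ici] at hx; linarith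
      have := (hderiv (-x) hx').comp x ((hasDerivAt_neg x))
      exact this.congr_deriv (by ring))
    ?_ ?_
  · have h2 : (∫ x in Ioi (-b), -f' (-x)) = -∫ x in Ioi (-b), f' (-x) := by
      rw [integral_neg]
    rw [h2, integral_comp_neg_Ioi] at key
    have h3 : (∫ x in Iic (- -b), f' x) = ∫ x in Iio b, f' x := by
      rw [neg_neg, integral_Iic_eq_integral_Iio]
    rw [h3] at key
    simp at key
    linarith
  · -- integrability of x ↦ -f'(-x) on Ioi (-b)
    have A : MeasurableEmbedding fun x : ℝ => -x :=
      (Homeomorph.neg ℝ).isClosedEmbedding.measurableEmbedding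
    have : IntegrableOn (fun x => f' (-x)) (Ioi (-b)) := by
      rw [← Measure.map_neg_eq_self (volume : Measure ℝ), A.integrableOn_map_iff]
      simpa [Function.comp_def, neg_preimage, neg_Ioi, neg_neg] using f'int
    exact this.neg
  · exact hf.comp tendsto_neg_atTop_atBot

lemma hasDerivAt_pdf (x : ℝ) : HasDerivAt stdNormalPDF (-x * stdNormalPDF x) x := by
  have h1 : HasDerivAt (fun x : ℝ => -x ^ 2 / 2) (-x) x := by
    have := ((hasDerivAt_pow 2 x).neg).div_const 2
    refine this.congr_deriv ?_
    symm
    push_cast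
    ring
  have h2 := (h1.exp).const_mul (Real.sqrt (2 * Real.pi))⁻¹
  have : HasDerivAt stdNormalPDF ((Real.sqrt (2 * Real.pi))⁻¹ * (Real.exp (-x ^ 2 / 2) * -x)) x := h2
  convert this using 1
  unfold stdNormalPDF
  ring

lemma cdf_mono : Monotone stdNormalCDF := by
  intro x y hxy
  exact setIntegral_mono_set integrable_pdf.integrableOn
    (Filter.Eventually.of_forall fun t => (pdf_pos t).le)
    (HasSubset.Subset.eventuallyLE (Iio_subset_Iio hxy))

lemma tendsto_inv_atBot_zero'' : Tendsto (fun t : ℝ => t⁻¹) atBot (nhds 0) := by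
  have h1 : Tendsto (fun t : ℝ => -t) atBot atTop := tendsto_neg_atBot_atTop
  have h2 := (tendsto_inv_atTop_zero (𝕜 := ℝ)).comp h1
  have h3 := h2.neg
  rw [neg_zero] at h3
  refine h3.congr fun t => ?_
  simp only [Function.comp_apply, inv_neg, neg_neg]

lemma mills_lower (x : ℝ) : -x * stdNormalPDF x / (x ^ 2 + 1) ≤ stdNormalCDF x := by
  set G : ℝ → ℝ := fun t => -t * stdNormalPDF t / (t ^ 2 + 1) with hG
  set g : ℝ → ℝ := fun t => stdNormalPDF t * ((t ^ 4 + 2 * t ^ 2 - 1) / (t ^ 2 + 1) ^ 2) with hg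
  have hne : ∀ t : ℝ, t ^ 2 + 1 ≠ 0 := fun t => by positivity
  have hderiv : ∀ t ∈ Iic x, HasDerivAt G (g t) t := by
    intro t _
    have h1 : HasDerivAt (fun t : ℝ => -t * stdNormalPDF t) (-stdNormalPDF t + -t * (-t * stdNormalPDF t)) t := by
      exact ((hasDerivAt_id t).neg.mul (hasDerivAt_pdf t)).congr_deriv (by simp only [Pi.neg_apply, id_eq]; ring)
    have h2 : HasDerivAt (fun t : ℝ => t ^ 2 + 1) (2 * t) t := by
      simpa using ((hasDerivAt_pow 2 t).add_const 1)
    have := h1.div h2 (hne t)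
    refine this.congr_deriv ?_
    symm
    show stdNormalPDF t * ((t ^ 4 + 2 * t ^ 2 - 1) / (t ^ 2 + 1) ^ 2) = _
    rw [mul_div_assoc', div_eq_div_iff (by positivity) (by positivity)]
    ring
  have hgle : ∀ t : ℝ, |g t| ≤ stdNormalPDF t := by
    intro t
    have h1 : |(t ^ 4 + 2 * t ^ 2 - 1) / (t ^ 2 + 1) ^ 2| ≤ 1 := by
      rw [abs_div, abs_of_nonneg (by positivity : (0:ℝ) ≤ (t ^ 2 + 1) ^ 2), div_le_one (by positivity)]
      rw [abs_le]
      constructor <;> nlinarith [sq_nonneg t, sq_nonneg (t^2)]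
    calc |g t| = stdNormalPDF t * |(t ^ 4 + 2 * t ^ 2 - 1) / (t ^ 2 + 1) ^ 2| := by
          rw [hg, abs_mul, abs_of_nonneg (pdf_pos t).le]
      _ ≤ stdNormalPDF t * 1 := mul_le_mul_of_nonneg_left h1 (pdf_pos t).le
      _ = stdNormalPDF t := mul_one _
  have hgmeas : AEStronglyMeasurable g (volume.restrict (Iio x)) := by
    apply Continuous.aestronglyMeasurable
    apply continuous_pdf.mul
    apply Continuous.div
    · continuity
    · continuity
    · intro t; positivity
  have hgint : IntegrableOn g (Iio x) := by
    refine Integrable.mono (integrable_pdf.integrableOn) hgmeas ?_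
    refine Filter.Eventually.of_forall fun t => ?_
    rw [Real.norm_eq_abs, Real.norm_eq_abs, abs_of_nonneg (pdf_pos t).le]
    exact hgle t
  have hTend : Tendsto G atBot (nhds 0) := by
    have h1 : Tendsto (fun t : ℝ => -t / (t ^ 2 + 1)) atBot (nhds 0) := by
      have hnum : Tendsto (fun t : ℝ => -t⁻¹) atBot (nhds 0) := by
        simpa using (tendsto_inv_atBot_zero'').neg
      have hden : Tendsto (fun t : ℝ => 1 + t⁻¹ ^ 2) atBot (nhds 1) := by
        have := ((tendsto_inv_atBot_zero'').pow 2).const_add (1:ℝ)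
        simpa using this
      have := hnum.div hden (by norm_num)
      rw [zero_div] at this
      refine this.congr' ?_
      filter_upwards [eventually_lt_atBot (0:ℝ)] with t ht
      have ht' : t ≠ 0 := ht.ne
      simp only [Pi.div_apply]
      field_simp
    have := h1.mul pdf_tendsto_atBot
    rw [zero_mul] at this
    refine this.congr fun t => ?_
    rw [hG]
    ring
  have key := integral_Iio_of_hasDerivAt_of_tendsto' hderiv hgint hTend
  rw [sub_zero] at key
  have hle : (∫ t in Iio x, g t) ≤ ∫ t in Iio x, stdNormalPDF t := by
    refine setIntegral_mono_on hgint integrable_pdf.integrableOn measurableSet_Iio ?_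
    intro t _
    calc g t ≤ |g t| := le_abs_self _
      _ ≤ stdNormalPDF t := hgle t
  rw [key] at hle
  exact hle

lemma mills_upper (x : ℝ) (hx : x < 0) : stdNormalCDF x ≤ -stdNormalPDF x / x := by
  set F : ℝ → ℝ := fun t => -stdNormalPDF t / t with hF
  set g : ℝ → ℝ := fun t => stdNormalPDF t * ((t ^ 2 + 1) / t ^ 2) with hg
  have hderiv : ∀ t ∈ Iic x, HasDerivAt F (g t) t := by
    intro t ht
    have htne : t ≠ 0 := by rw [mem_Iic] at ht; exact (lt_of_le_of_lt ht hx).ne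
    have h1 := ((hasDerivAt_pdf t).neg).div (hasDerivAt_id t) htne
    refine h1.congr_deriv ?_
    symm
    show stdNormalPDF t * ((t ^ 2 + 1) / t ^ 2) = _
    rw [mul_div_assoc', div_eq_div_iff (by positivity) (by positivity)]
    simp only [id_eq, Pi.neg_apply]
    ring
  have hgmeas : AEStronglyMeasurable g (volume.restrict (Iio x)) := by
    refine ContinuousOn.aestronglyMeasurable ?_ measurableSet_Iio
    refine (continuous_pdf.continuousOn).mul (ContinuousOn.div ?_ ?_ ?_)
    · exact ((continuous_pow 2).add continuous_const).continuousOn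
    · exact (continuous_pow 2).continuousOn
    · intro t ht
      have : t ≠ 0 := (lt_trans ht hx).ne
      positivity
  have hgint : IntegrableOn g (Iio x) := by
    refine Integrable.mono ((integrable_pdf.const_mul ((x ^ 2 + 1) / x ^ 2)).integrableOn) hgmeas ?_
    refine (ae_restrict_iff' measurableSet_Iio).mpr (Filter.Eventually.of_forall fun t ht => ?_)
    rw [mem_Iio] at ht
    have htx : t < 0 := lt_trans ht hx
    have ht2 : x ^ 2 ≤ t ^ 2 := by nlinarith
    have hx2 : (0:ℝ) < x ^ 2 := by nlinarith
    have ht2' : (0:ℝ) < t ^ 2 := by nlinarith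
    have hb : (t ^ 2 + 1) / t ^ 2 ≤ (x ^ 2 + 1) / x ^ 2 := by
      rw [div_le_div_iff₀ ht2' hx2]
      nlinarith
    have hgt : g t = stdNormalPDF t * ((t ^ 2 + 1) / t ^ 2) := rfl
    rw [Real.norm_eq_abs, Real.norm_eq_abs, hgt]
    rw [abs_of_nonneg (mul_nonneg (pdf_pos t).le (by positivity)),
      abs_of_nonneg (mul_nonneg (by positivity) (pdf_pos t).le)]
    calc stdNormalPDF t * ((t ^ 2 + 1) / t ^ 2)
        ≤ stdNormalPDF t * ((x ^ 2 + 1) / x ^ 2) := mul_le_mul_of_nonneg_left hb (pdf_pos t).le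
      _ = (x ^ 2 + 1) / x ^ 2 * stdNormalPDF t := mul_comm _ _
  have hTend : Tendsto F atBot (nhds 0) := by
    have h1 := (pdf_tendsto_atBot.neg).mul tendsto_inv_atBot_zero''
    rw [neg_zero, zero_mul] at h1
    refine h1.congr fun t => ?_
    rw [hF]
    simp only [div_eq_mul_inv, neg_mul]
  have key := integral_Iio_of_hasDerivAt_of_tendsto' hderiv hgint hTend
  rw [sub_zero] at key
  have hle : (∫ t in Iio x, stdNormalPDF t) ≤ ∫ t in Iio x, g t := by
    refine setIntegral_mono_on integrable_pdf.integrableOn hgint measurableSet_Iio ?_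
    intro t ht
    rw [mem_Iio] at ht
    have htx : t < 0 := lt_trans ht hx
    have ht2' : (0:ℝ) < t ^ 2 := by nlinarith
    have h1 : (1:ℝ) ≤ (t ^ 2 + 1) / t ^ 2 := by
      rw [le_div_iff₀ ht2']
      linarith
    calc stdNormalPDF t = stdNormalPDF t * 1 := (mul_one _).symm
      _ ≤ stdNormalPDF t * ((t ^ 2 + 1) / t ^ 2) := mul_le_mul_of_nonneg_left h1 (pdf_pos t).le
  rw [key] at hle
  exact hle

lemma cdf_pos (x : ℝ) : 0 < stdNormalCDF x := by
  set y := min x (-1) with hy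
  have hy0 : y < 0 := lt_of_le_of_lt (min_le_right _ _) (by norm_num)
  have h1 : -y * stdNormalPDF y / (y ^ 2 + 1) ≤ stdNormalCDF y := mills_lower y
  have h2 : (0:ℝ) < -y * stdNormalPDF y / (y ^ 2 + 1) := by
    have hp := pdf_pos y
    have hny : 0 < -y := by linarith
    positivity
  exact lt_of_lt_of_le (lt_of_lt_of_le h2 h1) (cdf_mono (min_le_left _ _))

lemma tendsto_nat_log_atTop : Tendsto (fun p : ℕ => Real.log p) atTop atTop :=
  Real.tendsto_log_atTop.comp tendsto_natCast_atTop_atTop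

lemma tendsto_nat_log_inv : Tendsto (fun p : ℕ => (Real.log p)⁻¹) atTop (nhds 0) :=
  tendsto_inv_atTop_zero.comp tendsto_nat_log_atTop

lemma tendsto_log_div_self : Tendsto (fun y : ℝ => Real.log y / y) atTop (nhds 0) := by
  have h := Real.tendsto_pow_log_div_mul_add_atTop 1 0 1 one_ne_zero
  refine h.congr fun y => by simp

/-- If `α/(α+p) ≤ φ(a_p)` and `α/(α+p) ≥ φ(a_p)/(2 (-a_p))` with `a_p ≤ -1`,
then `a_p² / (2 log p) → 1`. -/
lemma sq_div_log_tendsto (α : ℝ) (hα : 0 < α) (a : ℕ → ℝ)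
    (ha : ∀ᶠ p : ℕ in atTop, a p ≤ -1)
    (hup : ∀ᶠ p : ℕ in atTop, α / (α + p) ≤ stdNormalPDF (a p))
    (hlow : ∀ᶠ p : ℕ in atTop, stdNormalPDF (a p) / (2 * (-(a p))) ≤ α / (α + p)) :
    Tendsto (fun p : ℕ => (a p) ^ 2 / (2 * Real.log p)) atTop (nhds 1) := by
  set K : ℝ := (Real.sqrt (2 * Real.pi))⁻¹ with hK
  have hKpos : 0 < K := by rw [hK]; positivity
  set C : ℝ := Real.log K - Real.log α with hC
  set M : ℕ → ℝ := fun p => 2 * (Real.log (α + p) + C) with hM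
  -- M → ∞
  have hαp : ∀ p : ℕ, (0:ℝ) < α + p := fun p => by positivity
  have hMtop : Tendsto M atTop atTop := by
    have h1 : Tendsto (fun p : ℕ => α + (p:ℝ)) atTop atTop :=
      tendsto_atTop_add_const_left _ _ tendsto_natCast_atTop_atTop
    have h2 := Real.tendsto_log_atTop.comp h1
    have h3 := tendsto_atTop_add_const_right _ C h2
    exact (tendsto_const_mul_atTop_of_pos (by norm_num : (0:ℝ) < 2)).mpr h3
  -- upper: a² ≤ M p
  have hup2 : ∀ᶠ p : ℕ in atTop, (a p) ^ 2 ≤ M p := by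
    filter_upwards [hup] with p hp
    have h1 : Real.log (α / (α + p)) ≤ Real.log (stdNormalPDF (a p)) :=
      Real.log_le_log (by positivity) hp
    rw [Real.log_div hα.ne' (hαp p).ne'] at h1
    have h2 : Real.log (stdNormalPDF (a p)) = Real.log K + (-(a p) ^ 2 / 2) := by
      show Real.log (K * Real.exp (-(a p) ^ 2 / 2)) = _
      rw [Real.log_mul hKpos.ne' (Real.exp_ne_zero _), Real.log_exp]
    rw [h2] at h1
    simp only [hM, hC]
    linarith
  -- lower: M p - 2 log (2 √(M p)) ≤ a²
  have hlow2 : ∀ᶠ p : ℕ in atTop, M p - 2 * Real.log (2 * Real.sqrt (M p)) ≤ (a p) ^ 2 := by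
    filter_upwards [hlow, ha, hup2, hMtop.eventually_ge_atTop 1] with p hp hap hsq hM1
    have hna : (1:ℝ) ≤ -(a p) := by linarith
    have hna0 : (0:ℝ) < -(a p) := by linarith
    have h1 : Real.log (stdNormalPDF (a p) / (2 * (-(a p)))) ≤ Real.log (α / (α + p)) :=
      Real.log_le_log (by have := pdf_pos (a p); positivity) hp
    have h2 : Real.log (stdNormalPDF (a p) / (2 * (-(a p)))) =
        Real.log K + (-(a p) ^ 2 / 2) - Real.log (2 * (-(a p))) := by
      rw [Real.log_div (pdf_pos (a p)).ne' (by positivity)]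
      congr 1
      show Real.log (K * Real.exp (-(a p) ^ 2 / 2)) = _
      rw [Real.log_mul hKpos.ne' (Real.exp_ne_zero _), Real.log_exp]
    rw [h2, Real.log_div hα.ne' (hαp p).ne'] at h1
    have h3 : Real.log (2 * (-(a p))) ≤ Real.log (2 * Real.sqrt (M p)) := by
      apply Real.log_le_log (by positivity)
      have : -(a p) ≤ Real.sqrt (M p) := by
        have := Real.sqrt_le_sqrt hsq
        rwa [Real.sqrt_sq_eq_abs, abs_of_nonpos (by linarith : a p ≤ 0)] at this
      linarith
    simp only [hM, hC]
    linarith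
  -- limits of the bounding sequences
  have hUlim : Tendsto (fun p : ℕ => M p / (2 * Real.log p)) atTop (nhds 1) := by
    have hev : ∀ᶠ p : ℕ in atTop, M p / (2 * Real.log p) =
        1 + ((Real.log (α + p) - Real.log p) + C) * (Real.log p)⁻¹ := by
      filter_upwards [tendsto_nat_log_atTop.eventually_ge_atTop 1] with p hlp
      have hlp0 : Real.log p ≠ 0 := by positivity
      rw [hM]
      field_simp
      ring
    have h1 : Tendsto (fun p : ℕ => Real.log (α + p) - Real.log p) atTop (nhds 0) := by
      have hq : Tendsto (fun p : ℕ => (α + p) / p) atTop (nhds 1) := by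
        have := (tendsto_const_div_atTop_nhds_zero_nat α).const_add (1:ℝ)
        rw [add_zero] at this
        refine this.congr' ?_
        filter_upwards [eventually_gt_atTop 0] with p hp
        have hp0 : (p:ℝ) ≠ 0 := Nat.cast_ne_zero.mpr hp.ne'
        field_simp
        ring
      have h2 := (Real.continuousAt_log one_ne_zero).tendsto.comp hq
      rw [Real.log_one] at h2
      refine h2.congr' ?_
      filter_upwards [eventually_gt_atTop 0] with p hp
      have hp0 : (0:ℝ) < p := Nat.cast_pos.mpr hp
      simp only [Function.comp_apply]
      rw [Real.log_div (by positivity) hp0.ne']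
    have h3 := ((h1.add_const C).mul tendsto_nat_log_inv).const_add (1:ℝ)
    have h4 : (1:ℝ) + (0 + C) * 0 = 1 := by ring
    rw [h4] at h3
    exact Tendsto.congr' (hev.mono fun p hp => hp.symm) h3
  have hlast : Tendsto (fun p : ℕ => Real.log (2 * Real.sqrt (M p)) / Real.log p) atTop (nhds 0) := by
    have hlogM_M : Tendsto (fun p : ℕ => Real.log (M p) / M p) atTop (nhds 0) :=
      tendsto_log_div_self.comp hMtop
    have h5 := (tendsto_nat_log_inv.const_mul (Real.log 2)).add (hlogM_M.mul hUlim)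
    have h6 : Real.log 2 * 0 + 0 * 1 = 0 := by ring
    rw [h6] at h5
    refine Tendsto.congr' ?_ h5
    filter_upwards [hMtop.eventually_ge_atTop 1, tendsto_nat_log_atTop.eventually_ge_atTop 1]
      with p hM1 hlp
    have hM0 : (0:ℝ) < M p := by linarith
    have hlp0 : Real.log p ≠ 0 := by positivity
    have e1 : Real.log (2 * Real.sqrt (M p)) = Real.log 2 + Real.log (M p) / 2 := by
      rw [Real.log_mul (by norm_num) (by positivity), Real.log_sqrt hM0.le]
    rw [e1]
    field_simp
  have hLlim : Tendsto (fun p : ℕ => (M p - 2 * Real.log (2 * Real.sqrt (M p))) / (2 * Real.log p))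
      atTop (nhds 1) := by
    have h7 := hUlim.sub hlast
    rw [sub_zero] at h7
    refine Tendsto.congr' ?_ h7
    filter_upwards [tendsto_nat_log_atTop.eventually_ge_atTop 1] with p hlp
    have hlp0 : Real.log p ≠ 0 := by positivity
    field_simp
  refine tendsto_of_tendsto_of_tendsto_of_le_of_le' hLlim hUlim ?_ ?_
  · filter_upwards [hlow2, tendsto_nat_log_atTop.eventually_ge_atTop 1] with p h2 hlp
    have hlp0 : (0:ℝ) < 2 * Real.log p := by linarith
    exact div_le_div_of_nonneg_right h2 hlp0.le
  · filter_upwards [hup2, tendsto_nat_log_atTop.eventually_ge_atTop 1] with p h2 hlp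
    have hlp0 : (0:ℝ) < 2 * Real.log p := by linarith
    exact div_le_div_of_nonneg_right h2 hlp0.le

lemma pdf_ratio (a b : ℝ) : stdNormalPDF b / stdNormalPDF a = Real.exp ((a ^ 2 - b ^ 2) / 2) := by
  unfold stdNormalPDF
  rw [mul_div_mul_left _ _ (by positivity : (Real.sqrt (2 * Real.pi))⁻¹ ≠ 0), ← Real.exp_sub]
  congr 1
  ring

set_option maxHeartbeats 2000000 in
/-- Theorem 6, part i: with covariate effect mean `c = x_i^T γ` and variance
`s = x_i^T Ψ x_i ≥ 0`, the expected number of features per sample in the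
covariate-dependent MVP-IBP model satisfies
`lim_{p→∞} p Φ((μ_p + c)/√(2 log p + s)) = α exp(c + (s-1)/2)`. -/
theorem mvpIBP_cov_expected_features (α : ℝ) (hα : 0 < α) (μ : ℕ → ℝ)
    (hμ : ∀ p : ℕ, 2 ≤ p →
      stdNormalCDF (μ p / Real.sqrt (1 + tauP p ^ 2)) = α / (α + p))
    (c s : ℝ) (hs : 0 ≤ s) :
    Filter.Tendsto
      (fun p : ℕ => (p : ℝ) * stdNormalCDF ((μ p + c) / Real.sqrt (2 * Real.log p + s)))
      Filter.atTop (nhds (α * Real.exp (c + (s - 1) / 2))) := by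
  set L : ℕ → ℝ := fun p => 2 * Real.log p with hLdef
  set A : ℕ → ℝ := fun p => μ p / Real.sqrt (1 + L p) with hAdef
  set B : ℕ → ℝ := fun p => (μ p + c) / Real.sqrt (L p + s) with hBdef
  have hαp : ∀ p : ℕ, (0:ℝ) < α + p := fun p => by positivity
  have hLtop : Tendsto L atTop atTop :=
    (tendsto_const_mul_atTop_of_pos (by norm_num : (0:ℝ) < 2)).mpr tendsto_nat_log_atTop
  have hLev : ∀ᶠ p : ℕ in atTop, (2:ℝ) ≤ L p := hLtop.eventually_ge_atTop 2
  -- `Φ(A p) = α/(α+p)` eventually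
  have hPhiA : ∀ᶠ p : ℕ in atTop, stdNormalCDF (A p) = α / (α + p) := by
    filter_upwards [eventually_ge_atTop 2] with p hp
    have h1 : tauP p ^ 2 = L p := by
      rw [tauP, Real.sq_sqrt]
      have : (1:ℝ) ≤ p := by exact_mod_cast Nat.one_le_of_lt hp
      have := Real.log_nonneg this
      linarith
    have := hμ p hp
    rw [h1] at this
    exact this
  -- `α/(α+p) → 0`
  have h0 : Tendsto (fun p : ℕ => α / (α + p)) atTop (nhds 0) :=
    Tendsto.div_atTop tendsto_const_nhds (tendsto_atTop_add_const_left _ _ tendsto_natCast_atTop_atTop)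
  -- `A p ≤ -1` eventually
  have hAneg : ∀ᶠ p : ℕ in atTop, A p ≤ -1 := by
    filter_upwards [hPhiA, h0.eventually (eventually_lt_nhds (cdf_pos (-1)))] with p h1 h2
    by_contra hcon
    push_neg at hcon
    have := cdf_mono hcon.le
    rw [h1] at this
    exact absurd this (not_le.mpr h2)
  -- apply the key asymptotic lemma
  have hr : Tendsto (fun p : ℕ => (A p) ^ 2 / L p) atTop (nhds 1) := by
    refine sq_div_log_tendsto α hα A ?_ ?_ ?_
    · exact hAneg
    · filter_upwards [hPhiA, hAneg] with p h1 h2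
      have hA0 : A p < 0 := by linarith
      have h4 : -stdNormalPDF (A p) / A p ≤ stdNormalPDF (A p) := by
        have he : -stdNormalPDF (A p) / A p = stdNormalPDF (A p) / (-A p) := by
          rw [neg_div, ← div_neg]
        rw [he]
        exact div_le_self (pdf_pos _).le (by linarith)
      have h3 := (mills_upper (A p) hA0).trans h4
      rw [h1] at h3; exact h3
    · filter_upwards [hPhiA, hAneg] with p h1 h2
      have hA0 : A p < 0 := by linarith
      have h3 : stdNormalPDF (A p) / (2 * (-(A p))) ≤ -(A p) * stdNormalPDF (A p) / ((A p) ^ 2 + 1) := by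
        rw [div_le_div_iff₀ (by linarith) (by positivity)]
        have h5 : stdNormalPDF (A p) * (A p ^ 2 + 1) ≤ stdNormalPDF (A p) * (2 * A p ^ 2) :=
          mul_le_mul_of_nonneg_left (by nlinarith) (pdf_pos _).le
        have h6 : -A p * stdNormalPDF (A p) * (2 * -A p) = stdNormalPDF (A p) * (2 * A p ^ 2) := by
          ring
        rw [h6]
        exact h5
      have h4 := h3.trans (mills_lower (A p))
      rw [h1] at h4
      exact h4
  -- auxiliary sequences
  set l : ℕ → ℝ := fun p => (L p)⁻¹ with hldef
  have hl : Tendsto l atTop (nhds 0) := tendsto_inv_atTop_zero.comp hLtop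
  set u : ℕ → ℝ := fun p => A p / Real.sqrt (L p) with hudef
  set v : ℕ → ℝ := fun p => B p / Real.sqrt (L p) with hvdef
  set w : ℕ → ℝ := fun p => μ p / L p with hwdef
  -- u → -1
  have hu : Tendsto u atTop (nhds (-1)) := by
    have h1 : Tendsto (fun p : ℕ => -Real.sqrt ((A p) ^ 2 / L p)) atTop (nhds (-1)) := by
      have := hr.sqrt
      rw [Real.sqrt_one] at this
      exact this.neg
    refine Tendsto.congr' ?_ h1
    filter_upwards [hLev, hAneg] with p hL hA
    have hL0 : (0:ℝ) < L p := by linarith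
    rw [Real.sqrt_div (sq_nonneg (A p)), Real.sqrt_sq_eq_abs, abs_of_nonpos (by linarith),
      neg_div, neg_neg]
  -- w → -1
  have hw : Tendsto w atTop (nhds (-1)) := by
    have h1 : Tendsto (fun p : ℕ => u p * Real.sqrt (l p + 1)) atTop (nhds (-1)) := by
      have h2 := (hl.add_const 1).sqrt
      rw [zero_add, Real.sqrt_one] at h2
      have := hu.mul h2
      rw [mul_one] at this
      exact this
    refine Tendsto.congr' ?_ h1
    filter_upwards [hLev] with p hL
    have hL0 : (0:ℝ) < L p := by linarith
    have h3 : l p + 1 = (1 + L p) / L p := by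
      rw [hldef]
      field_simp
    have hsL : Real.sqrt (L p) * Real.sqrt (L p) = L p := Real.mul_self_sqrt hL0.le
    have hs1L : Real.sqrt (1 + L p) ≠ 0 := Real.sqrt_ne_zero'.mpr (by linarith)
    have hAm : A p * Real.sqrt (1 + L p) = μ p := by
      rw [hAdef]
      exact div_mul_cancel₀ _ hs1L
    rw [h3, Real.sqrt_div (by linarith : (0:ℝ) ≤ 1 + L p)]
    show A p / Real.sqrt (L p) * (Real.sqrt (1 + L p) / Real.sqrt (L p)) = μ p / L p
    rw [div_mul_div_comm, hAm, hsL]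
  -- w + c*l → -1
  have hwc : Tendsto (fun p : ℕ => w p + c * l p) atTop (nhds (-1)) := by
    have := hw.add (hl.const_mul c)
    rw [mul_zero, add_zero] at this
    exact this
  -- μ p + c = L p * (w p + c * l p) eventually
  have hmuc : ∀ᶠ p : ℕ in atTop, μ p + c = L p * (w p + c * l p) := by
    filter_upwards [hLev] with p hL
    have hL0 : L p ≠ 0 := by linarith
    rw [hwdef, hldef]
    field_simp
  -- B < 0 eventually
  have hBneg : ∀ᶠ p : ℕ in atTop, B p < 0 := by
    filter_upwards [hLev, hmuc,
      hwc.eventually (eventually_lt_nhds (by norm_num : (-1:ℝ) < -1/2))] with p hL hm hlt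
    have hL0 : (0:ℝ) < L p := by linarith
    have h1 : μ p + c < 0 := by
      rw [hm]
      exact mul_neg_of_pos_of_neg hL0 (by linarith)
    rw [hBdef]
    exact div_neg_of_neg_of_pos h1 (Real.sqrt_pos.mpr (by linarith))
  -- v² → 1
  have hv2 : Tendsto (fun p : ℕ => (v p) ^ 2) atTop (nhds 1) := by
    have h1 : Tendsto (fun p : ℕ => (w p + c * l p) ^ 2 / (1 + s * l p)) atTop
        (nhds ((-1:ℝ) ^ 2 / (1 + s * 0))) := by
      exact (hwc.pow 2).div ((hl.const_mul s).const_add 1) (by norm_num)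
    have heq : ((-1:ℝ)) ^ 2 / (1 + s * 0) = 1 := by norm_num
    rw [heq] at h1
    refine Tendsto.congr' ?_ h1
    filter_upwards [hLev] with p hL
    have hL0 : (0:ℝ) < L p := by linarith
    have hLs : (0:ℝ) < L p + s := by linarith
    have e1 : Real.sqrt (L p) ^ 2 = L p := Real.sq_sqrt hL0.le
    have e2 : Real.sqrt (L p + s) ^ 2 = L p + s := Real.sq_sqrt hLs.le
    show (μ p / L p + c * (L p)⁻¹) ^ 2 / (1 + s * (L p)⁻¹) =
      ((μ p + c) / Real.sqrt (L p + s) / Real.sqrt (L p)) ^ 2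
    rw [div_pow, div_pow, e1, e2]
    field_simp
  -- v → -1
  have hv : Tendsto v atTop (nhds (-1)) := by
    have h1 := hv2.sqrt
    rw [Real.sqrt_one] at h1
    refine Tendsto.congr' ?_ h1.neg
    filter_upwards [hBneg, hLev] with p hB hL
    have : v p ≤ 0 := by
      rw [hvdef]
      exact div_nonpos_of_nonpos_of_nonneg hB.le (Real.sqrt_nonneg _)
    rw [Real.sqrt_sq_eq_abs, abs_of_nonpos this, neg_neg]
  -- A² - B² → s - 1 + 2c
  have hAB : Tendsto (fun p : ℕ => (A p) ^ 2 - (B p) ^ 2) atTop (nhds (s - 1 + 2 * c)) := by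
    have hnum : Tendsto (fun p : ℕ => (w p) ^ 2 * (s - 1) - 2 * w p * c -
        l p * (2 * w p * c + c ^ 2) - (l p) ^ 2 * c ^ 2) atTop
        (nhds ((-1:ℝ) ^ 2 * (s - 1) - 2 * (-1) * c - 0 * (2 * (-1) * c + c ^ 2) - 0 ^ 2 * c ^ 2)) := by
      refine Tendsto.sub (Tendsto.sub (Tendsto.sub ((hw.pow 2).mul_const (s - 1))
        ((hw.const_mul 2).mul_const c)) (hl.mul (((hw.const_mul 2).mul_const c).add_const (c ^ 2))))
        ((hl.pow 2).mul_const (c ^ 2))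
    have hden : Tendsto (fun p : ℕ => (1 + l p) * (1 + s * l p)) atTop
        (nhds ((1 + 0) * (1 + s * 0))) := (hl.const_add 1).mul ((hl.const_mul s).const_add 1)
    have hE := hnum.div hden (by norm_num)
    have heq : ((-1:ℝ) ^ 2 * (s - 1) - 2 * (-1) * c - 0 * (2 * (-1) * c + c ^ 2) - 0 ^ 2 * c ^ 2) /
        ((1 + 0) * (1 + s * 0)) = s - 1 + 2 * c := by ring
    rw [heq] at hE
    refine Tendsto.congr' ?_ hE
    filter_upwards [hLev] with p hL
    have hL0 : (0:ℝ) < L p := by linarith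
    have hLs : (0:ℝ) < L p + s := by linarith
    have h1L : (0:ℝ) < 1 + L p := by linarith
    have hA2 : (A p) ^ 2 = (μ p) ^ 2 / (1 + L p) := by
      rw [hAdef]
      show (μ p / Real.sqrt (1 + L p)) ^ 2 = _
      rw [div_pow, Real.sq_sqrt h1L.le]
    have hB2 : (B p) ^ 2 = (μ p + c) ^ 2 / (L p + s) := by
      rw [hBdef]
      show ((μ p + c) / Real.sqrt (L p + s)) ^ 2 = _
      rw [div_pow, Real.sq_sqrt hLs.le]
    have h2 : (A p) ^ 2 - (B p) ^ 2 = (μ p) ^ 2 / (1 + L p) - (μ p + c) ^ 2 / (L p + s) := by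
      rw [hA2, hB2]
    rw [h2]
    show ((μ p / L p) ^ 2 * (s - 1) - 2 * (μ p / L p) * c -
        (L p)⁻¹ * (2 * (μ p / L p) * c + c ^ 2) - ((L p)⁻¹) ^ 2 * c ^ 2) /
        ((1 + (L p)⁻¹) * (1 + s * (L p)⁻¹)) = _
    field_simp
    ring
  -- D := exp((A²-B²)/2) → exp(c+(s-1)/2)
  set T : ℝ := Real.exp (c + (s - 1) / 2) with hTdef
  have hD : Tendsto (fun p : ℕ => Real.exp (((A p) ^ 2 - (B p) ^ 2) / 2)) atTop (nhds T) := by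
    have : Tendsto (fun p : ℕ => Real.exp (((A p) ^ 2 - (B p) ^ 2) / 2)) atTop
        (nhds (Real.exp ((s - 1 + 2 * c) / 2))) :=
      ((Real.continuous_exp.tendsto _).comp (hAB.div_const 2)).congr fun p => rfl
    have heq : Real.exp ((s - 1 + 2 * c) / 2) = T := by
      rw [hTdef]
      congr 1
      ring
    rw [heq] at this
    exact this
  have hu2 : Tendsto (fun p : ℕ => (u p) ^ 2) atTop (nhds 1) := by
    have := hu.pow 2
    norm_num at this
    exact this
  have huv : Tendsto (fun p : ℕ => u p * v p) atTop (nhds 1) := by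
    have := hu.mul hv
    norm_num at this
    exact this
  -- the two bounding sequences for the ratio
  have hlo : Tendsto (fun p : ℕ => u p * v p / ((v p) ^ 2 + l p) *
      Real.exp (((A p) ^ 2 - (B p) ^ 2) / 2)) atTop (nhds T) := by
    have h1 := (huv.div (hv2.add hl) (by norm_num)).mul hD
    norm_num at h1
    exact h1
  have hhi : Tendsto (fun p : ℕ => ((u p) ^ 2 + l p) / (u p * v p) *
      Real.exp (((A p) ^ 2 - (B p) ^ 2) / 2)) atTop (nhds T) := by
    have h1 := ((hu2.add hl).div huv (by norm_num)).mul hD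
    norm_num at h1
    exact h1
  -- algebraic identities
  have hident : ∀ᶠ p : ℕ in atTop, (u p * v p = A p * B p / L p ∧
      (u p) ^ 2 + l p = ((A p) ^ 2 + 1) / L p) ∧ (v p) ^ 2 + l p = ((B p) ^ 2 + 1) / L p := by
    filter_upwards [hLev] with p hL
    have hL0 : (0:ℝ) < L p := by linarith
    have hss : Real.sqrt (L p) * Real.sqrt (L p) = L p := Real.mul_self_sqrt hL0.le
    have e1 : Real.sqrt (L p) ^ 2 = L p := Real.sq_sqrt hL0.le
    refine ⟨⟨?_, ?_⟩, ?_⟩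
    · show A p / Real.sqrt (L p) * (B p / Real.sqrt (L p)) = _
      rw [div_mul_div_comm, hss]
    · show (A p / Real.sqrt (L p)) ^ 2 + (L p)⁻¹ = _
      rw [div_pow, e1, inv_eq_one_div, ← add_div]
    · show (B p / Real.sqrt (L p)) ^ 2 + (L p)⁻¹ = _
      rw [div_pow, e1, inv_eq_one_div, ← add_div]
  -- ratio squeeze
  have hratio : Tendsto (fun p : ℕ => stdNormalCDF (B p) / stdNormalCDF (A p)) atTop (nhds T) := by
    refine tendsto_of_tendsto_of_tendsto_of_le_of_le' hlo hhi ?_ ?_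
    · -- lower bound
      filter_upwards [hAneg, hBneg, hLev, hident] with p hA hB hL hid
      have hL0 : (0:ℝ) < L p := by linarith
      have hA0 : A p < 0 := by linarith
      have hφA := pdf_pos (A p)
      have hφB := pdf_pos (B p)
      have step1 : -(B p) * stdNormalPDF (B p) / ((B p) ^ 2 + 1) ≤ stdNormalCDF (B p) :=
        mills_lower (B p)
      have step2 : stdNormalCDF (A p) ≤ stdNormalPDF (A p) / (-(A p)) := by
        have := mills_upper (A p) hA0
        rwa [neg_div, ← div_neg] at this
      have step3 : -(B p) * stdNormalPDF (B p) / ((B p) ^ 2 + 1) / (stdNormalPDF (A p) / (-(A p)))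
          ≤ stdNormalCDF (B p) / stdNormalCDF (A p) :=
        div_le_div₀ (cdf_pos (B p)).le step1 (cdf_pos (A p)) step2
      refine le_trans (le_of_eq ?_) step3
      rw [← pdf_ratio (A p) (B p), hid.1.1, hid.2]
      have hB0 : B p ≠ 0 := hB.ne
      have hA0' : A p ≠ 0 := hA0.ne
      field_simp
    · -- upper bound
      filter_upwards [hAneg, hBneg, hLev, hident] with p hA hB hL hid
      have hL0 : (0:ℝ) < L p := by linarith
      have hA0 : A p < 0 := by linarith
      have hφA := pdf_pos (A p)
      have hφB := pdf_pos (B p)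
      have step1 : stdNormalCDF (B p) ≤ stdNormalPDF (B p) / (-(B p)) := by
        have := mills_upper (B p) hB
        rwa [neg_div, ← div_neg] at this
      have step2 : -(A p) * stdNormalPDF (A p) / ((A p) ^ 2 + 1) ≤ stdNormalCDF (A p) :=
        mills_lower (A p)
      have hd : (0:ℝ) < -(A p) * stdNormalPDF (A p) / ((A p) ^ 2 + 1) := by
        have h1 : (0:ℝ) < -(A p) := by linarith
        positivity
      have step3 : stdNormalCDF (B p) / stdNormalCDF (A p) ≤
          stdNormalPDF (B p) / (-(B p)) / (-(A p) * stdNormalPDF (A p) / ((A p) ^ 2 + 1)) :=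
        div_le_div₀ (div_nonneg hφB.le (by linarith : (0:ℝ) ≤ -(B p))) step1 hd step2
      refine le_trans step3 (le_of_eq ?_)
      rw [← pdf_ratio (A p) (B p), hid.1.1, hid.1.2]
      have hB0 : B p ≠ 0 := hB.ne
      have hA0' : A p ≠ 0 := hA0.ne
      field_simp
  -- p * Φ(A p) → α
  have hpA : Tendsto (fun p : ℕ => (p : ℝ) * stdNormalCDF (A p)) atTop (nhds α) := by
    have h1 : Tendsto (fun p : ℕ => α * (1 - α / (α + p))) atTop (nhds (α * (1 - 0))) :=
      (h0.const_sub 1).const_mul α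
    rw [sub_zero, mul_one] at h1
    refine Tendsto.congr' ?_ h1
    filter_upwards [hPhiA] with p hp
    rw [hp]
    have := hαp p
    field_simp
    ring
  -- conclusion
  have hfinal := hpA.mul hratio
  rw [hTdef] at hfinal
  refine Tendsto.congr' ?_ hfinal
  filter_upwards [] with p
  have hΦA := cdf_pos (A p)
  rw [mul_div_assoc', mul_comm ((p:ℝ) * stdNormalCDF (A p)) (stdNormalCDF (B p)),
    mul_div_assoc, mul_div_assoc]
  rw [div_self hΦA.ne', mul_one, mul_comm]
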